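/- For 0 < α < ∞, there exist two functions f₁, f₂ in the Bloch type space B_α such that (1-|z|²)^{2α}(|f₁'(z)|² + |f₂'(z)|²) ≈ 1 for all z ∈ D; i.e. the quantity is bounded above and below by positive constants independent of z. -/

import Mathlib

open MeasureTheory Real Set Metric Filter

noncomputable section

/-- The point `e^{iθ}` on the unit circle. -/
def expI (θ : ℝ) : ℂ := Complex.exp (θ * Complex.I)

/-- Mean value of `f` over the subarc of the unit circle starting at angle `a`
with angular length `ℓ`. -/
def arcMean (f : ℂ → ℂ) (a ℓ : ℝ) : ℂ := (ℓ⁻¹ : ℝ) • ∫ θ in a..(a + ℓ), f (expI θ)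

/-- `f` has Campanato `(p,η)`-seminorm at most `M`:
for every subarc `I`, `|I|^{-η} ∫_I |f - f_I|^p |dζ|/(2π) ≤ M^p`. -/
def campBound (p η M : ℝ) (f : ℂ → ℂ) : Prop :=
  ∀ a ℓ : ℝ, 0 < ℓ → ℓ ≤ 2 * π →
    (∫ θ in a..(a + ℓ), ‖f (expI θ) - arcMean f a ℓ‖ ^ p) / (2 * π)
      ≤ (ℓ / (2 * π)) ^ η * M ^ p

/-- `f ∈ L^p` of the circle (locally, in the interval-integrable sense). -/
def pIntegrableOnCircle (p : ℝ) (f : ℂ → ℂ) : Prop :=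
  ∀ a b : ℝ, IntervalIntegrable (fun θ => ‖f (expI θ)‖ ^ p) volume a b


/-- coefficient base -/
def bB (α : ℝ) (q : ℕ) : ℝ := (q : ℝ) ^ α

/-- exponents -/
def eE (q n : ℕ) : ℕ := if n = 0 then 0 else q ^ n

def gTerm (α : ℝ) (q n : ℕ) (z : ℂ) : ℂ := ((bB α q ^ n : ℝ) : ℂ) * z ^ eE q n

def fTerm (α : ℝ) (q n : ℕ) (z : ℂ) : ℂ :=
  ((bB α q ^ n / (eE q n + 1) : ℝ) : ℂ) * z ^ (eE q n + 1)

def gFun (α : ℝ) (q p : ℕ) (z : ℂ) : ℂ := ∑' k, gTerm α q (2 * k + p) z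

def fFun (α : ℝ) (q p : ℕ) (z : ℂ) : ℂ := ∑' k, fTerm α q (2 * k + p) z

section est

variable {α : ℝ} {q : ℕ}

lemma bB_pos (hα : 0 < α) (hq : 2 ≤ q) : 0 < bB α q := by
  have h : (0:ℝ) < q := by
    have : 0 < q := by omega
    exact_mod_cast this
  exact Real.rpow_pos_of_pos h α

lemma hasDerivAt_fTerm (n : ℕ) (z : ℂ) :
    HasDerivAt (fun w => fTerm α q n w) (gTerm α q n z) z := by
  have h := (hasDerivAt_pow (eE q n + 1) z).const_mul
      (((bB α q ^ n / (eE q n + 1) : ℝ) : ℂ))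
  refine (show HasDerivAt (fun w => fTerm α q n w) _ z from h).congr_deriv ?_
  symm
  have hne : ((eE q n : ℂ) + 1) ≠ 0 := Nat.cast_add_one_ne_zero _
  simp only [Nat.add_sub_cancel, gTerm]
  push_cast
  field_simp


lemma qR_pos (hq : 2 ≤ q) : (0:ℝ) < q := by
  have : 0 < q := by omega
  exact_mod_cast this

lemma pow_rpow_eq (hq : 2 ≤ q) (m : ℕ) : ((q:ℝ) ^ m) ^ α = bB α q ^ m := by
  have h0 : (0:ℝ) ≤ q := (qR_pos hq).le
  rw [← Real.rpow_natCast (q:ℝ) m, ← Real.rpow_natCast (bB α q) m, bB,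
    ← Real.rpow_mul h0, ← Real.rpow_mul h0, mul_comm]

lemma exists_n (hq : 2 ≤ q) {r : ℝ} (hr0 : 0 ≤ r) (hr1 : r < 1) :
    ∃ n : ℕ, 1 - ((q:ℝ) ^ n)⁻¹ ≤ r ∧ r ≤ 1 - ((q:ℝ) ^ (n + 1))⁻¹ := by
  have h1r : (0:ℝ) < 1 - r := by linarith
  set v : ℝ := (1 - r)⁻¹ with hv
  have hv1 : 1 ≤ v := by
    rw [hv, le_inv_comm₀ one_pos h1r]
    linarith
  have hm1 : 1 ≤ ⌊v⌋₊ := (Nat.one_le_floor_iff _).mpr hv1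
  set n := Nat.log q ⌊v⌋₊ with hn
  have hql : q ^ n ≤ ⌊v⌋₊ := Nat.pow_log_le_self q (by omega)
  have hqu : ⌊v⌋₊ < q ^ (n + 1) := Nat.lt_pow_succ_log_self (by omega) _
  have hlow : ((q:ℝ) ^ n) ≤ v := by
    calc ((q:ℝ) ^ n) = ((q ^ n : ℕ) : ℝ) := by push_cast; ring
    _ ≤ (⌊v⌋₊ : ℝ) := by exact_mod_cast hql
    _ ≤ v := Nat.floor_le (by linarith)
  have hhigh : v ≤ (q:ℝ) ^ (n + 1) := by
    have h1 : v < (⌊v⌋₊ : ℝ) + 1 := Nat.lt_floor_add_one v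
    have h2 : ((⌊v⌋₊ : ℕ) : ℝ) + 1 ≤ ((q ^ (n+1) : ℕ) : ℝ) := by
      exact_mod_cast Nat.succ_le_of_lt hqu
    push_cast at h2 ⊢
    linarith
  have hqn : (0:ℝ) < (q:ℝ) ^ n := pow_pos (qR_pos hq) n
  have hqn1 : (0:ℝ) < (q:ℝ) ^ (n + 1) := pow_pos (qR_pos hq) _
  refine ⟨n, ?_, ?_⟩
  · have : 1 - r ≤ ((q:ℝ) ^ n)⁻¹ := by
      rw [hv] at hlow
      have := inv_anti₀ hqn hlow
      rwa [inv_inv] at this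
    linarith
  · have : ((q:ℝ) ^ (n + 1))⁻¹ ≤ 1 - r := by
      rw [hv] at hhigh
      have h0 : (0:ℝ) < v := by linarith
      have := inv_anti₀ (by positivity) hhigh
      rwa [inv_inv] at this
    linarith

/-- The key tail bound: for `r ≤ 1 - q^{-(n+1)}` and any `m`,
`b^{n+1+m} r^{e(n+1+m)} ≤ b^{n+1} s^m` with `s = b e^{-q/2}`. -/
lemma key_bound (hα : 0 < α) (hq : 2 ≤ q) {r : ℝ} (hr0 : 0 ≤ r) {n : ℕ}
    (h2 : r ≤ 1 - ((q:ℝ) ^ (n + 1))⁻¹) (m : ℕ) :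
    bB α q ^ (n + 1 + m) * r ^ eE q (n + 1 + m)
      ≤ bB α q ^ (n + 1) * (bB α q * Real.exp (-(q:ℝ) / 2)) ^ m := by
  have hb0 : 0 < bB α q := bB_pos hα hq
  have hq0 : (0:ℝ) < q := qR_pos hq
  have he : eE q (n + 1 + m) = q ^ (n + 1 + m) := by simp [eE]
  rw [he]
  have step1 : r ^ q ^ (n + 1 + m) ≤ Real.exp (-(q:ℝ) ^ m) := by
    have hx : ((q:ℝ) ^ (n+1))⁻¹ ≤ 1 := by
      rw [inv_le_one_iff₀]
      right
      exact one_le_pow₀ (by exact_mod_cast hq.trans' (by norm_num) : (1:ℝ) ≤ q)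
    calc r ^ q ^ (n + 1 + m) ≤ (1 - ((q:ℝ) ^ (n+1))⁻¹) ^ q ^ (n + 1 + m) :=
          pow_le_pow_left₀ hr0 h2 _
    _ ≤ (Real.exp (-((q:ℝ) ^ (n+1))⁻¹)) ^ q ^ (n + 1 + m) := by
        apply pow_le_pow_left₀ (by linarith)
        have := Real.add_one_le_exp (-((q:ℝ) ^ (n+1))⁻¹)
        linarith
    _ = Real.exp (-((q:ℝ) ^ (n+1))⁻¹ * (q ^ (n + 1 + m) : ℕ)) := by
        rw [← Real.exp_nat_mul]; ring_nf
    _ ≤ Real.exp (-(q:ℝ) ^ m) := by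
        apply Real.exp_le_exp.mpr
        have : ((q ^ (n + 1 + m) : ℕ) : ℝ) = (q:ℝ) ^ (n+1) * (q:ℝ) ^ m := by
          push_cast; rw [← pow_add]
        rw [this]
        have hpos : (0:ℝ) < (q:ℝ) ^ (n+1) := pow_pos hq0 _
        have : -((q:ℝ) ^ (n+1))⁻¹ * ((q:ℝ) ^ (n+1) * (q:ℝ) ^ m) = -(q:ℝ) ^ m := by
          field_simp
        rw [this]
  have step2 : Real.exp (-(q:ℝ) ^ m) ≤ Real.exp (-(q:ℝ) / 2) ^ m := by
    rw [← Real.exp_nat_mul]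
    apply Real.exp_le_exp.mpr
    have hnat : q * m ≤ 2 * q ^ m := by
      rcases Nat.eq_zero_or_pos m with hm | hm
      · simp [hm]
      · have h1 : m ≤ 2 ^ (m - 1) * 2 := by
          have := Nat.lt_two_pow_self (n := m)
          have h2 : 2 ^ (m-1) * 2 = 2 ^ m := by
            rw [← pow_succ]
            congr 1
            omega
          omega
        calc q * m ≤ q * (2 ^ (m-1) * 2) := Nat.mul_le_mul_left _ h1
        _ = 2 * (q * 2 ^ (m-1)) := by ring
        _ ≤ 2 * (q * q ^ (m-1)) := by
            apply Nat.mul_le_mul_left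
            exact Nat.mul_le_mul_left _ (Nat.pow_le_pow_left hq _)
        _ = 2 * q ^ m := by
            have : q * q ^ (m-1) = q ^ m := by
              rw [← pow_succ']
              congr 1
              omega
            rw [this]
    have : (q:ℝ) * m ≤ 2 * (q:ℝ) ^ m := by exact_mod_cast hnat
    nlinarith
  calc bB α q ^ (n + 1 + m) * r ^ q ^ (n + 1 + m)
      ≤ bB α q ^ (n + 1 + m) * Real.exp (-(q:ℝ) ^ m) := by
        apply mul_le_mul_of_nonneg_left step1 (by positivity)
  _ ≤ bB α q ^ (n + 1 + m) * Real.exp (-(q:ℝ) / 2) ^ m := by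
        apply mul_le_mul_of_nonneg_left step2 (by positivity)
  _ = bB α q ^ (n + 1) * (bB α q * Real.exp (-(q:ℝ) / 2)) ^ m := by
        rw [pow_add, mul_pow]; ring


/-- abbreviation for the small geometric ratio -/
def sS (α : ℝ) (q : ℕ) : ℝ := bB α q * Real.exp (-(q:ℝ) / 2)

lemma sS_pos (hα : 0 < α) (hq : 2 ≤ q) : 0 < sS α q := by
  have := bB_pos (α := α) hα hq
  unfold sS
  positivity

lemma bs_le (hs : bB α q ^ 2 * Real.exp (-(q:ℝ) / 2) ≤ 1 / 256) :
    bB α q * sS α q ≤ 1 / 256 := by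
  unfold sS
  nlinarith [sq_nonneg (bB α q)]

lemma sS_le_half (hα : 0 < α) (hq : 2 ≤ q) (hb : 16 ≤ bB α q)
    (hs : bB α q ^ 2 * Real.exp (-(q:ℝ) / 2) ≤ 1 / 256) : sS α q ≤ 1 / 2 := by
  have h1 := bs_le (α := α) (q := q) hs
  have h2 := sS_pos hα hq
  nlinarith

lemma summable_tail (hα : 0 < α) (hq : 2 ≤ q) (hb : 16 ≤ bB α q)
    (hs : bB α q ^ 2 * Real.exp (-(q:ℝ) / 2) ≤ 1 / 256)
    {r : ℝ} (hr0 : 0 ≤ r) {n : ℕ} (h2 : r ≤ 1 - ((q:ℝ) ^ (n + 1))⁻¹) :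
    Summable (fun j => bB α q ^ (n + 2 + j) * r ^ eE q (n + 2 + j)) ∧
    ∑' j, bB α q ^ (n + 2 + j) * r ^ eE q (n + 2 + j) ≤ bB α q ^ n / 128 := by
  have hb0 := bB_pos (α := α) hα hq
  have hs0 := sS_pos (α := α) hα hq
  have hsh := sS_le_half hα hq hb hs
  have hbs := bs_le (α := α) (q := q) hs
  have hmaj : ∀ j : ℕ, bB α q ^ (n + 2 + j) * r ^ eE q (n + 2 + j)
      ≤ (bB α q ^ (n + 1) * sS α q) * sS α q ^ j := by
    intro j
    have := key_bound hα hq hr0 h2 (j + 1)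
    have he : n + 1 + (j + 1) = n + 2 + j := by omega
    rw [he] at this
    calc bB α q ^ (n + 2 + j) * r ^ eE q (n + 2 + j)
        ≤ bB α q ^ (n + 1) * sS α q ^ (j + 1) := this
    _ = (bB α q ^ (n + 1) * sS α q) * sS α q ^ j := by rw [pow_succ]; ring
  have hgeo : Summable (fun j : ℕ => (bB α q ^ (n + 1) * sS α q) * sS α q ^ j) :=
    (summable_geometric_of_lt_one hs0.le (by linarith)).mul_left _
  have hsum : Summable (fun j => bB α q ^ (n + 2 + j) * r ^ eE q (n + 2 + j)) := by
    apply Summable.of_nonneg_of_le (fun j => by positivity) hmaj hgeo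
  refine ⟨hsum, ?_⟩
  calc ∑' j, bB α q ^ (n + 2 + j) * r ^ eE q (n + 2 + j)
      ≤ ∑' j, (bB α q ^ (n + 1) * sS α q) * sS α q ^ j := Summable.tsum_le_tsum hmaj hsum hgeo
  _ = (bB α q ^ (n + 1) * sS α q) * (1 - sS α q)⁻¹ := by
      rw [tsum_mul_left, tsum_geometric_of_lt_one hs0.le (by linarith)]
  _ ≤ (bB α q ^ (n + 1) * sS α q) * 2 := by
      apply mul_le_mul_of_nonneg_left _ (by positivity)
      rw [inv_le_comm₀ (by linarith) (by norm_num)]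
      linarith
  _ = bB α q ^ n * (bB α q * sS α q) * 2 := by rw [pow_succ]; ring
  _ ≤ bB α q ^ n * (1 / 256) * 2 := by
      apply mul_le_mul_of_nonneg_right _ (by norm_num)
      exact mul_le_mul_of_nonneg_left hbs (by positivity)
  _ ≤ bB α q ^ n / 128 := by
      have : (0:ℝ) < bB α q ^ n := by positivity
      linarith

lemma summable_w (hα : 0 < α) (hq : 2 ≤ q) (hb : 16 ≤ bB α q)
    (hs : bB α q ^ 2 * Real.exp (-(q:ℝ) / 2) ≤ 1 / 256)
    {r : ℝ} (hr0 : 0 ≤ r) (hr1 : r < 1) :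
    Summable (fun j => bB α q ^ j * r ^ eE q j) := by
  obtain ⟨n, _, h2⟩ := exists_n hq hr0 hr1
  have := (summable_tail hα hq hb hs hr0 h2).1
  have h : Summable (fun j => bB α q ^ (j + (n + 2)) * r ^ eE q (j + (n + 2))) := by
    apply this.congr
    intro j
    congr 1 <;> rw [Nat.add_comm (n+2) j]
  exact (summable_nat_add_iff (n + 2)).mp h

lemma W_le (hα : 0 < α) (hq : 2 ≤ q) (hb : 16 ≤ bB α q)
    (hs : bB α q ^ 2 * Real.exp (-(q:ℝ) / 2) ≤ 1 / 256)
    {r : ℝ} (hr0 : 0 ≤ r) {n : ℕ} (h2 : r ≤ 1 - ((q:ℝ) ^ (n + 1))⁻¹) :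
    ∑' j, bB α q ^ j * r ^ eE q j ≤ 3 * bB α q ^ (n + 1) := by
  have hb0 := bB_pos (α := α) hα hq
  have hr1 : r < 1 := by
    have : (0:ℝ) < ((q:ℝ) ^ (n+1))⁻¹ := by
      have := qR_pos (q := q) hq
      positivity
    linarith
  have hsum := summable_w hα hq hb hs hr0 hr1
  rw [← Summable.sum_add_tsum_nat_add (n + 2) hsum]
  have hfin : ∑ j ∈ Finset.range (n + 2), bB α q ^ j * r ^ eE q j
      ≤ 2 * bB α q ^ (n + 1) := by
    have h1 : ∑ j ∈ Finset.range (n + 2), bB α q ^ j * r ^ eE q j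
        ≤ ∑ j ∈ Finset.range (n + 2), bB α q ^ j := by
      apply Finset.sum_le_sum
      intro j _
      have : r ^ eE q j ≤ 1 := pow_le_one₀ hr0 hr1.le
      nlinarith [pow_pos hb0 j, pow_nonneg hr0 (eE q j)]
    have hne : bB α q ≠ 1 := by linarith
    have h2' : ∑ j ∈ Finset.range (n + 2), bB α q ^ j
        = (bB α q ^ (n + 2) - 1) / (bB α q - 1) := geom_sum_eq hne _
    rw [h2'] at h1
    have h3 : (bB α q ^ (n + 2) - 1) / (bB α q - 1) ≤ 2 * bB α q ^ (n + 1) := by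
      rw [div_le_iff₀ (by linarith)]
      have hp : (0:ℝ) < bB α q ^ (n + 1) := by positivity
      have : bB α q ^ (n + 2) = bB α q ^ (n + 1) * bB α q := by rw [pow_succ]
      nlinarith
    linarith
  have htail : ∑' j, bB α q ^ (j + (n + 2)) * r ^ eE q (j + (n + 2))
      ≤ bB α q ^ (n + 1) := by
    have h := (summable_tail hα hq hb hs hr0 h2).2
    have heq : ∑' j, bB α q ^ (j + (n + 2)) * r ^ eE q (j + (n + 2))
        = ∑' j, bB α q ^ (n + 2 + j) * r ^ eE q (n + 2 + j) := by
      apply tsum_congr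
      intro j
      congr 1 <;> rw [Nat.add_comm (n+2) j]
    rw [heq]
    have hp : (0:ℝ) < bB α q ^ n := by positivity
    have hq1 : bB α q ^ n ≤ bB α q ^ (n + 1) := by
      calc bB α q ^ n = bB α q ^ n * 1 := by ring
      _ ≤ bB α q ^ n * bB α q := by nlinarith
      _ = bB α q ^ (n + 1) := by rw [pow_succ]
    calc ∑' j, bB α q ^ (n + 2 + j) * r ^ eE q (n + 2 + j) ≤ bB α q ^ n / 128 := h
    _ ≤ bB α q ^ (n + 1) := by linarith
  linarith

lemma lower_exp {N : ℕ} (hN : 2 ≤ N) {r : ℝ} (hr0 : 0 ≤ r)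
    (h1 : 1 - (N:ℝ)⁻¹ ≤ r) : Real.exp (-2) ≤ r ^ N := by
  have hN0 : (0:ℝ) < N := by
    have : 0 < N := by omega
    exact_mod_cast this
  set x : ℝ := (N:ℝ)⁻¹ with hx
  have hx0 : 0 < x := by positivity
  have hx2 : x ≤ 1 / 2 := by
    rw [hx, inv_le_comm₀ hN0 (by norm_num)]
    norm_num
    exact_mod_cast hN
  have key : Real.exp (-2 * x) ≤ 1 - x := by
    have h1' : 1 + 2 * x ≤ Real.exp (2 * x) := by
      have := Real.add_one_le_exp (2 * x)
      linarith
    have h2' : Real.exp (-2 * x) = (Real.exp (2 * x))⁻¹ := by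
      rw [← Real.exp_neg]; ring_nf
    rw [h2']
    have hp : (0:ℝ) < 1 + 2 * x := by linarith
    have hpos : (0:ℝ) < 1 - x := by linarith
    have h4 : (1 - x)⁻¹ ≤ 1 + 2 * x := by
      rw [inv_eq_one_div, div_le_iff₀ hpos]
      nlinarith
    calc (Real.exp (2 * x))⁻¹ ≤ (1 + 2 * x)⁻¹ := by
          apply inv_anti₀ hp h1'
    _ ≤ 1 - x := by
          rw [inv_le_comm₀ hp hpos] at *
          linarith [h4]
  have hkey2 : Real.exp (-2 * x) ≤ r := key.trans h1
  have hpow : Real.exp (-2 * x) ^ N ≤ r ^ N :=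
    pow_le_pow_left₀ (Real.exp_pos _).le hkey2 N
  have heq : Real.exp (-2 * x) ^ N = Real.exp (-2) := by
    rw [← Real.exp_nat_mul]
    congr 1
    rw [hx]
    field_simp
  rwa [heq] at hpow


lemma norm_gTerm (hα : 0 < α) (hq : 2 ≤ q) (n : ℕ) (z : ℂ) :
    ‖gTerm α q n z‖ = bB α q ^ n * ‖z‖ ^ eE q n := by
  have hb0 := bB_pos (α := α) hα hq
  rw [gTerm, norm_mul, norm_pow, Complex.norm_real]
  rw [Real.norm_eq_abs, abs_of_nonneg (by positivity)]

lemma inj2p (p : ℕ) : Function.Injective (fun k : ℕ => 2 * k + p) := by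
  intro a b h
  simp only at h
  omega

lemma summable_norm_gTerm (hα : 0 < α) (hq : 2 ≤ q) (hb : 16 ≤ bB α q)
    (hs : bB α q ^ 2 * Real.exp (-(q:ℝ) / 2) ≤ 1 / 256) (p : ℕ) {z : ℂ}
    (hz : ‖z‖ < 1) :
    Summable (fun k => ‖gTerm α q (2 * k + p) z‖) := by
  have h := (summable_w hα hq hb hs (norm_nonneg z) hz).comp_injective (inj2p p)
  apply h.congr
  intro k
  rw [norm_gTerm hα hq]
  rfl

lemma summable_gTerm (hα : 0 < α) (hq : 2 ≤ q) (hb : 16 ≤ bB α q)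
    (hs : bB α q ^ 2 * Real.exp (-(q:ℝ) / 2) ≤ 1 / 256) (p : ℕ) {z : ℂ}
    (hz : ‖z‖ < 1) :
    Summable (fun k => gTerm α q (2 * k + p) z) :=
  (summable_norm_gTerm hα hq hb hs p hz).of_norm

lemma norm_gFun_le (hα : 0 < α) (hq : 2 ≤ q) (hb : 16 ≤ bB α q)
    (hs : bB α q ^ 2 * Real.exp (-(q:ℝ) / 2) ≤ 1 / 256) (p : ℕ) {z : ℂ} {n : ℕ}
    (h2 : ‖z‖ ≤ 1 - ((q:ℝ) ^ (n + 1))⁻¹) :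
    ‖gFun α q p z‖ ≤ 3 * bB α q ^ (n + 1) := by
  have hr0 : (0:ℝ) ≤ ‖z‖ := norm_nonneg z
  have hr1 : ‖z‖ < 1 := by
    have h := qR_pos (q := q) hq
    have : (0:ℝ) < ((q:ℝ) ^ (n+1))⁻¹ := by positivity
    linarith
  calc ‖gFun α q p z‖ ≤ ∑' k, ‖gTerm α q (2 * k + p) z‖ :=
        norm_tsum_le_tsum_norm (summable_norm_gTerm hα hq hb hs p hr1)
  _ ≤ ∑' j, bB α q ^ j * ‖z‖ ^ eE q j := by
      apply Summable.tsum_le_tsum_of_inj (fun k : ℕ => 2 * k + p) (inj2p p)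
      · intro c _
        positivity
      · intro k
        rw [norm_gTerm hα hq]
      · exact summable_norm_gTerm hα hq hb hs p hr1
      · exact summable_w hα hq hb hs hr0 hr1
  _ ≤ 3 * bB α q ^ (n + 1) := W_le hα hq hb hs hr0 h2

lemma exp_neg_two_ge : (1:ℝ) / 8 ≤ Real.exp (-2) := by
  have h1 := Real.exp_one_lt_d9
  have h2 : Real.exp 2 = Real.exp 1 * Real.exp 1 := by
    rw [← Real.exp_add]; norm_num
  have h3 : Real.exp 2 ≤ 8 := by nlinarith [Real.exp_pos 1]
  have h4 : Real.exp (-2) = (Real.exp 2)⁻¹ := by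
    rw [← Real.exp_neg]
  rw [h4]
  rw [le_inv_comm₀ (by norm_num) (Real.exp_pos 2)]
  calc Real.exp 2 ≤ 8 := h3
  _ = (1/8 : ℝ)⁻¹ := by norm_num

lemma gFun_lower (hα : 0 < α) (hq : 2 ≤ q) (hb : 16 ≤ bB α q)
    (hs : bB α q ^ 2 * Real.exp (-(q:ℝ) / 2) ≤ 1 / 256) {z : ℂ} {n : ℕ}
    (h1 : 1 - ((q:ℝ) ^ n)⁻¹ ≤ ‖z‖)
    (h2 : ‖z‖ ≤ 1 - ((q:ℝ) ^ (n + 1))⁻¹) :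
    bB α q ^ n / 16 ≤ ‖gFun α q (n % 2) z‖ := by
  have hb0 := bB_pos (α := α) hα hq
  have hq0 := qR_pos (q := q) hq
  have hr0 : (0:ℝ) ≤ ‖z‖ := norm_nonneg z
  have hr1 : ‖z‖ < 1 := by
    have : (0:ℝ) < ((q:ℝ) ^ (n+1))⁻¹ := by positivity
    linarith
  set r := ‖z‖ with hr
  set p := n % 2 with hp
  set k0 := n / 2 with hk0
  have hk : 2 * k0 + p = n := by omega
  have hT := summable_gTerm hα hq hb hs p hr1
  have hTn := summable_norm_gTerm hα hq hb hs p hr1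
  -- split the sum
  have hsplit : gFun α q p z
      = (∑ k ∈ Finset.range k0, gTerm α q (2 * k + p) z) + gTerm α q (2 * k0 + p) z
        + ∑' i, gTerm α q (2 * (i + (k0 + 1)) + p) z := by
    rw [gFun, ← Summable.sum_add_tsum_nat_add (k0 + 1) hT, Finset.sum_range_succ]
  -- main term lower bound
  have hmain : Real.exp (-2) * bB α q ^ n ≤ ‖gTerm α q (2 * k0 + p) z‖ := by
    rw [hk, norm_gTerm hα hq]
    rcases Nat.eq_zero_or_pos n with hn0 | hn0
    · subst hn0
      simp only [eE, if_pos rfl, pow_zero, mul_one, one_mul]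
      have : Real.exp (-2) ≤ Real.exp 0 := Real.exp_le_exp.mpr (by norm_num)
      simpa using this
    · have he : eE q n = q ^ n := by
        simp [eE]
        omega
      rw [he]
      have hN2 : 2 ≤ q ^ n := by
        calc 2 ≤ q := hq
        _ = q ^ 1 := (pow_one q).symm
        _ ≤ q ^ n := Nat.pow_le_pow_right (by omega) hn0
      have hcast : ((q ^ n : ℕ) : ℝ) = (q:ℝ) ^ n := by push_cast; ring
      have := lower_exp hN2 hr0 (by rw [hcast]; exact h1)
      nlinarith [pow_pos hb0 n]
  -- lower part bound
  have hlow : ‖∑ k ∈ Finset.range k0, gTerm α q (2 * k + p) z‖ ≤ bB α q ^ n / 128 := by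
    calc ‖∑ k ∈ Finset.range k0, gTerm α q (2 * k + p) z‖
        ≤ ∑ k ∈ Finset.range k0, ‖gTerm α q (2 * k + p) z‖ := norm_sum_le _ _
    _ ≤ ∑ k ∈ Finset.range k0, bB α q ^ (2 * k + p) := by
        apply Finset.sum_le_sum
        intro k _
        rw [norm_gTerm hα hq]
        have h1' : r ^ eE q (2 * k + p) ≤ 1 := pow_le_one₀ hr0 hr1.le
        nlinarith [pow_pos hb0 (2 * k + p), pow_nonneg hr0 (eE q (2 * k + p))]
    _ ≤ bB α q ^ n / 128 := by
        have heq : ∀ k : ℕ, bB α q ^ (2 * k + p) = bB α q ^ p * (bB α q ^ 2) ^ k := by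
          intro k
          rw [pow_add, pow_mul]
          ring
        have hsum : ∑ k ∈ Finset.range k0, bB α q ^ (2 * k + p)
            = bB α q ^ p * ∑ k ∈ Finset.range k0, (bB α q ^ 2) ^ k := by
          rw [Finset.mul_sum]
          exact Finset.sum_congr rfl fun k _ => heq k
        have hne : bB α q ^ 2 ≠ 1 := by nlinarith
        rw [hsum, geom_sum_eq hne]
        have hb2 : (256:ℝ) ≤ bB α q ^ 2 := by nlinarith
        have hpp : (0:ℝ) < bB α q ^ p := pow_pos hb0 p
        rw [mul_div_assoc', div_le_div_iff₀ (by nlinarith) (by norm_num)]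
        have hkey : bB α q ^ p * (bB α q ^ 2) ^ k0 = bB α q ^ n := by
          rw [← pow_mul, ← pow_add]
          congr 1
          omega
        have hpos : (0:ℝ) < (bB α q ^ 2) ^ k0 := by positivity
        nlinarith [pow_pos hb0 n]
  -- tail bound
  have htail : ‖∑' i, gTerm α q (2 * (i + (k0 + 1)) + p) z‖ ≤ bB α q ^ n / 128 := by
    have hTn' : Summable (fun i => ‖gTerm α q (2 * (i + (k0 + 1)) + p) z‖) := by
      have := (summable_nat_add_iff (f := fun k => ‖gTerm α q (2 * k + p) z‖) (k0 + 1)).mpr hTn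
      apply this.congr
      intro i
      rfl
    have htt := summable_tail hα hq hb hs hr0 h2
    calc ‖∑' i, gTerm α q (2 * (i + (k0 + 1)) + p) z‖
        ≤ ∑' i, ‖gTerm α q (2 * (i + (k0 + 1)) + p) z‖ := norm_tsum_le_tsum_norm hTn'
    _ ≤ ∑' j, bB α q ^ (n + 2 + j) * r ^ eE q (n + 2 + j) := by
        apply Summable.tsum_le_tsum_of_inj (fun i : ℕ => 2 * i) (fun a b h => by simp only at h; omega)
        · intro c _
          positivity
        · intro i
          rw [norm_gTerm hα hq]
          have : 2 * (i + (k0 + 1)) + p = n + 2 + 2 * i := by omega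
          rw [this]
        · exact hTn'
        · exact htt.1
    _ ≤ bB α q ^ n / 128 := htt.2
  -- combine
  have hcomb : ‖gTerm α q (2 * k0 + p) z‖ ≤ ‖gFun α q p z‖
      + ‖∑ k ∈ Finset.range k0, gTerm α q (2 * k + p) z‖
      + ‖∑' i, gTerm α q (2 * (i + (k0 + 1)) + p) z‖ := by
    have : gTerm α q (2 * k0 + p) z = gFun α q p z
        - (∑ k ∈ Finset.range k0, gTerm α q (2 * k + p) z)
        - ∑' i, gTerm α q (2 * (i + (k0 + 1)) + p) z := by
      rw [hsplit]; ring
    rw [this]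
    calc ‖gFun α q p z - (∑ k ∈ Finset.range k0, gTerm α q (2 * k + p) z)
          - ∑' i, gTerm α q (2 * (i + (k0 + 1)) + p) z‖
        ≤ ‖gFun α q p z - (∑ k ∈ Finset.range k0, gTerm α q (2 * k + p) z)‖
          + ‖∑' i, gTerm α q (2 * (i + (k0 + 1)) + p) z‖ := norm_sub_le _ _
    _ ≤ ‖gFun α q p z‖ + ‖∑ k ∈ Finset.range k0, gTerm α q (2 * k + p) z‖
          + ‖∑' i, gTerm α q (2 * (i + (k0 + 1)) + p) z‖ := by
        have := norm_sub_le (gFun α q p z) (∑ k ∈ Finset.range k0, gTerm α q (2 * k + p) z)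
        linarith
  have hexp := exp_neg_two_ge
  have hpn : (0:ℝ) < bB α q ^ n := pow_pos hb0 n
  have : Real.exp (-2) * bB α q ^ n ≤ ‖gFun α q p z‖ + bB α q ^ n / 128 + bB α q ^ n / 128 := by
    linarith [hmain, hcomb, hlow, htail]
  nlinarith


lemma hasDerivAt_fFun (hα : 0 < α) (hq : 2 ≤ q) (hb : 16 ≤ bB α q)
    (hs : bB α q ^ 2 * Real.exp (-(q:ℝ) / 2) ≤ 1 / 256) (p : ℕ) {z : ℂ}
    (hz : ‖z‖ < 1) :
    HasDerivAt (fFun α q p) (gFun α q p z) z := by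
  have hb0 := bB_pos (α := α) hα hq
  set ρ : ℝ := (1 + ‖z‖) / 2 with hρ
  have hr0 : (0:ℝ) ≤ ‖z‖ := norm_nonneg z
  have hρ0 : 0 < ρ := by rw [hρ]; linarith
  have hρ1 : ρ < 1 := by rw [hρ]; linarith
  have hρz : ‖z‖ < ρ := by rw [hρ]; linarith
  have hu : Summable (fun k : ℕ => bB α q ^ (2 * k + p) * ρ ^ eE q (2 * k + p)) := by
    have := (summable_w hα hq hb hs hρ0.le hρ1).comp_injective (inj2p p)
    exact this
  have hbound : ∀ (k : ℕ) (y : ℂ), y ∈ Metric.ball (0:ℂ) ρ →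
      ‖gTerm α q (2 * k + p) y‖ ≤ bB α q ^ (2 * k + p) * ρ ^ eE q (2 * k + p) := by
    intro k y hy
    rw [norm_gTerm hα hq]
    have hy' : ‖y‖ < ρ := by
      rwa [Metric.mem_ball, dist_zero_right] at hy
    nlinarith [pow_pos hb0 (2 * k + p), pow_nonneg (norm_nonneg y) (eE q (2 * k + p)),
      pow_le_pow_left₀ (norm_nonneg y) hy'.le (eE q (2 * k + p)),
      pow_nonneg hρ0.le (eE q (2 * k + p))]
  have hsum0 : Summable (fun k : ℕ => fTerm α q (2 * k + p) (0:ℂ)) := by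
    have : ∀ k : ℕ, fTerm α q (2 * k + p) (0:ℂ) = 0 := by
      intro k
      simp [fTerm]
    simp only [this]
    exact summable_zero
  have hzmem : z ∈ Metric.ball (0:ℂ) ρ := by
    rw [Metric.mem_ball, dist_zero_right]
    exact hρz
  have key : HasDerivAt (fun w => ∑' k, fTerm α q (2 * k + p) w)
      (∑' k, gTerm α q (2 * k + p) z) z :=
    hasDerivAt_tsum_of_isPreconnected hu Metric.isOpen_ball
      ((convex_ball (0:ℂ) ρ).isPreconnected)
      (fun k y _ => hasDerivAt_fTerm (2 * k + p) y)
      hbound (Metric.mem_ball_self hρ0) hsum0 hzmem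
  exact key

end est

set_option maxHeartbeats 1000000 in
theorem two_bloch_functions' (α : ℝ) (hα : 0 < α) :
    ∃ f₁ f₂ : ℂ → ℂ, DifferentiableOn ℂ f₁ (Metric.ball 0 1) ∧
      DifferentiableOn ℂ f₂ (Metric.ball 0 1) ∧
      ∃ c₁ c₂ : ℝ, 0 < c₁ ∧ 0 < c₂ ∧ ∀ z : ℂ, ‖z‖ < 1 →
        c₁ ≤ (1 - ‖z‖ ^ 2) ^ (2*α) * (‖deriv f₁ z‖^2 + ‖deriv f₂ z‖^2) ∧
        (1 - ‖z‖ ^ 2) ^ (2*α) * (‖deriv f₁ z‖^2 + ‖deriv f₂ z‖^2) ≤ c₂ := by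
  -- choose q
  obtain ⟨q, hq, hb, hs⟩ : ∃ q : ℕ, 2 ≤ q ∧ 16 ≤ bB α q ∧
      bB α q ^ 2 * Real.exp (-(q:ℝ) / 2) ≤ 1 / 256 := by
    have h1 : ∀ᶠ x : ℝ in atTop, 16 ≤ x ^ α :=
      (tendsto_rpow_atTop hα).eventually_ge_atTop 16
    have h2 : Tendsto (fun x : ℝ => x ^ (2 * α) * Real.exp (-(1/2) * x)) atTop (nhds 0) :=
      tendsto_rpow_mul_exp_neg_mul_atTop_nhds_zero (2 * α) (1/2) (by norm_num)
    have h2' : ∀ᶠ x : ℝ in atTop, x ^ (2 * α) * Real.exp (-(1/2) * x) < 1 / 256 :=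
      h2.eventually_lt_const (by norm_num)
    have hcast : Tendsto (fun q : ℕ => (q : ℝ)) atTop atTop := tendsto_natCast_atTop_atTop
    have e1 := hcast.eventually h1
    have e2 := hcast.eventually h2'
    have e3 : ∀ᶠ q : ℕ in atTop, 2 ≤ q := eventually_ge_atTop 2
    obtain ⟨q, hq1, hq2, hq3⟩ := (e1.and (e2.and e3)).exists
    refine ⟨q, hq3, hq1, ?_⟩
    have hq0 : (0:ℝ) ≤ q := by positivity
    have key : bB α q ^ 2 = (q:ℝ) ^ (2 * α) := by
      rw [bB, ← Real.rpow_natCast ((q:ℝ) ^ α) 2, ← Real.rpow_mul hq0]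
      norm_num
      rw [mul_comm]
    rw [key]
    have : Real.exp (-(q:ℝ) / 2) = Real.exp (-(1/2) * (q:ℝ)) := by ring_nf
    rw [this]
    exact hq2.le
  have hb0 := bB_pos (α := α) hα hq
  have hq0 := qR_pos (q := q) hq
  refine ⟨fFun α q 0, fFun α q 1, ?_, ?_, ((16 * bB α q)⁻¹)^2,
    2 * ((2:ℝ) ^ α * (3 * bB α q))^2, by positivity, by positivity, ?_⟩
  · intro z hz
    rw [Metric.mem_ball, dist_zero_right] at hz
    exact (hasDerivAt_fFun hα hq hb hs 0 hz).differentiableAt.differentiableWithinAt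
  · intro z hz
    rw [Metric.mem_ball, dist_zero_right] at hz
    exact (hasDerivAt_fFun hα hq hb hs 1 hz).differentiableAt.differentiableWithinAt
  intro z hz
  have hd0 : deriv (fFun α q 0) z = gFun α q 0 z := (hasDerivAt_fFun hα hq hb hs 0 hz).deriv
  have hd1 : deriv (fFun α q 1) z = gFun α q 1 z := (hasDerivAt_fFun hα hq hb hs 1 hz).deriv
  rw [hd0, hd1]
  set r := ‖z‖ with hrdef
  have hr0 : (0:ℝ) ≤ r := norm_nonneg z
  obtain ⟨n, h1, h2⟩ := exists_n hq hr0 hz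
  have hq1 : (0:ℝ) < (q:ℝ) ^ n := pow_pos hq0 n
  have hq2 : (0:ℝ) < (q:ℝ) ^ (n+1) := pow_pos hq0 (n+1)
  have hr1 : r < 1 := hz
  have h1mr : 0 < 1 - r := by
    have : (0:ℝ) < ((q:ℝ) ^ (n+1))⁻¹ := by positivity
    linarith
  have h1mr2 : 0 < 1 - r ^ 2 := by nlinarith
  -- rpow identities
  have hsq : (1 - r ^ 2) ^ (2 * α) = ((1 - r ^ 2) ^ α) ^ 2 := by
    rw [mul_comm, Real.rpow_mul h1mr2.le, ← Real.rpow_natCast ((1 - r^2) ^ α) 2]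
    norm_num
  -- lower bound on (1-r²)^α
  have hlow : (bB α q ^ (n+1))⁻¹ ≤ (1 - r ^ 2) ^ α := by
    have ha : ((q:ℝ) ^ (n+1))⁻¹ ≤ 1 - r ^ 2 := by nlinarith
    have := Real.rpow_le_rpow (by positivity) ha hα.le
    calc (bB α q ^ (n+1))⁻¹ = (((q:ℝ) ^ (n+1))⁻¹) ^ α := by
          rw [← pow_rpow_eq hq (n+1), ← Real.inv_rpow hq2.le]
    _ ≤ (1 - r ^ 2) ^ α := this
  -- upper bound on (1-r²)^α
  have hup : (1 - r ^ 2) ^ α ≤ (2:ℝ) ^ α * (bB α q ^ n)⁻¹ := by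
    have ha : 1 - r ^ 2 ≤ 2 * ((q:ℝ) ^ n)⁻¹ := by
      have h1' : 1 - r ≤ ((q:ℝ) ^ n)⁻¹ := by linarith
      nlinarith
    calc (1 - r ^ 2) ^ α ≤ (2 * ((q:ℝ) ^ n)⁻¹) ^ α :=
          Real.rpow_le_rpow h1mr2.le ha hα.le
    _ = (2:ℝ) ^ α * (((q:ℝ) ^ n)⁻¹) ^ α := Real.mul_rpow (by norm_num) (by positivity)
    _ = (2:ℝ) ^ α * (bB α q ^ n)⁻¹ := by
        rw [← pow_rpow_eq hq n, ← Real.inv_rpow hq1.le]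
  have hgl : bB α q ^ n / 16 ≤ ‖gFun α q (n % 2) z‖ := gFun_lower hα hq hb hs h1 h2
  have hgu0 : ‖gFun α q 0 z‖ ≤ 3 * bB α q ^ (n+1) := norm_gFun_le hα hq hb hs 0 h2
  have hgu1 : ‖gFun α q 1 z‖ ≤ 3 * bB α q ^ (n+1) := norm_gFun_le hα hq hb hs 1 h2
  have hrpow_pos : (0:ℝ) < (1 - r ^ 2) ^ α := Real.rpow_pos_of_pos h1mr2 α
  have hbn : (0:ℝ) < bB α q ^ n := pow_pos hb0 n
  have hbn1 : (0:ℝ) < bB α q ^ (n+1) := pow_pos hb0 (n+1)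
  have hABl : bB α q ^ n / 16 ≤ ‖gFun α q 0 z‖ ∨ bB α q ^ n / 16 ≤ ‖gFun α q 1 z‖ := by
    rcases Nat.mod_two_eq_zero_or_one n with h | h <;> rw [h] at hgl
    · exact Or.inl hgl
    · exact Or.inr hgl
  clear hgl
  have hA0' : (0:ℝ) ≤ ‖gFun α q 0 z‖ := norm_nonneg _
  have hB0' : (0:ℝ) ≤ ‖gFun α q 1 z‖ := norm_nonneg _
  set A := ‖gFun α q 0 z‖ with hA
  set B := ‖gFun α q 1 z‖ with hB
  clear_value A B
  have hA0 : 0 ≤ A := hA0'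
  have hB0 : 0 ≤ B := hB0'
  set X := (1 - r ^ 2) ^ α with hX
  clear_value X
  have hstep : ∀ Y : ℝ, 0 ≤ Y → bB α q ^ n / 16 ≤ Y →
      ((16 * bB α q)⁻¹) ^ 2 ≤ X ^ 2 * Y ^ 2 := by
    intro Y hY0 hY
    have hm : (16 * bB α q)⁻¹ ≤ X * Y := by
      calc (16 * bB α q)⁻¹ = (bB α q ^ (n+1))⁻¹ * (bB α q ^ n / 16) := by
            rw [pow_succ]
            field_simp
      _ ≤ X * Y := mul_le_mul hlow hY (by positivity) hrpow_pos.le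
    calc ((16 * bB α q)⁻¹) ^ 2 ≤ (X * Y) ^ 2 :=
          pow_le_pow_left₀ (by positivity) hm 2
    _ = X ^ 2 * Y ^ 2 := by ring
  constructor
  · -- lower bound
    rw [hsq]
    rcases hABl with h | h
    · have := hstep A hA0 h
      nlinarith [sq_nonneg B, sq_nonneg X]
    · have := hstep B hB0 h
      nlinarith [sq_nonneg A, sq_nonneg X]
  · -- upper bound
    rw [hsq]
    have hb1 : X ^ 2 ≤ ((2:ℝ) ^ α * (bB α q ^ n)⁻¹) ^ 2 :=
      pow_le_pow_left₀ hrpow_pos.le hup 2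
    have hsum : A ^ 2 + B ^ 2 ≤ 2 * (3 * bB α q ^ (n+1)) ^ 2 := by
      nlinarith
    calc X ^ 2 * (A ^ 2 + B ^ 2)
        ≤ ((2:ℝ) ^ α * (bB α q ^ n)⁻¹) ^ 2 * (2 * (3 * bB α q ^ (n+1)) ^ 2) := by
          apply mul_le_mul hb1 hsum (by positivity) (by positivity)
    _ = 2 * ((2:ℝ) ^ α * (3 * bB α q)) ^ 2 := by
        rw [pow_succ]
        field_simp
        ring

/-- for `0 < α < ∞` there are two Bloch-type functions `f₁, f₂`
with `(1-|z|²)^{2α}(|f₁'(z)|² + |f₂'(z)|²) ≈ 1` on the unit disk. -/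
theorem two_bloch_functions (α : ℝ) (hα : 0 < α) :
    ∃ f₁ f₂ : ℂ → ℂ, DifferentiableOn ℂ f₁ (Metric.ball 0 1) ∧
      DifferentiableOn ℂ f₂ (Metric.ball 0 1) ∧
      ∃ c₁ c₂ : ℝ, 0 < c₁ ∧ 0 < c₂ ∧ ∀ z : ℂ, ‖z‖ < 1 →
        c₁ ≤ (1 - ‖z‖ ^ 2) ^ (2*α) * (‖deriv f₁ z‖^2 + ‖deriv f₂ z‖^2) ∧
        (1 - ‖z‖ ^ 2) ^ (2*α) * (‖deriv f₁ z‖^2 + ‖deriv f₂ z‖^2) ≤ c₂ := by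
  exact two_bloch_functions' α hα
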